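/- There is no universal probabilistic masker: for r ≥ 2, there is no injective linear map L : H_A ⊗ H_B → H_A ⊗ H_B and fixed unit |b⟩ ∈ H_B and density matrices ρ_A, ρ_B such that for every unit |a⟩ ∈ H_A, the normalized vector L(|a⟩⊗|b⟩)/‖L(|a⟩⊗|b⟩)‖ has partial traces equal to ρ_A and ρ_B. -/

import Mathlib

open Matrix Complex
open scoped ComplexOrder Classical

noncomputable def matSqrt {n : Type*} [Fintype n] [DecidableEq n]
    (A : Matrix n n ℂ) : Matrix n n ℂ :=
  if h : A.PosSemidef then (h.1.eigenvectorUnitary : Matrix n n ℂ) *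
    diagonal ((↑) ∘ (Real.sqrt ·) ∘ h.1.eigenvalues) * (star (h.1.eigenvectorUnitary : Matrix n n ℂ)) else 0

noncomputable def traceNorm {m n : Type*} [Fintype m] [Fintype n] [DecidableEq n]
    (A : Matrix m n ℂ) : ℝ :=
  ((matSqrt (Aᴴ * A)).trace).re

noncomputable def frobNorm {m n : Type*} [Fintype m] [Fintype n]
    (A : Matrix m n ℂ) : ℝ :=
  Real.sqrt (((Aᴴ * A).trace).re)

noncomputable def fidelity {n : Type*} [Fintype n] [DecidableEq n]
    (P Q : Matrix n n ℂ) : ℝ :=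
  ((matSqrt (matSqrt P * Q * matSqrt P)).trace).re

/-- The outer product |ψ⟩⟨ψ| of a vector. -/
noncomputable def outerMat {ι : Type*} (ψ : ι → ℂ) : Matrix ι ι ℂ :=
  fun p q => ψ p * (starRingEnd ℂ) (ψ q)

/-- Partial trace over the first (A) factor. -/
noncomputable def ptraceA {r s : ℕ} (ρ : Matrix (Fin r × Fin s) (Fin r × Fin s) ℂ) :
    Matrix (Fin s) (Fin s) ℂ :=
  fun k l => ∑ i : Fin r, ρ (i, k) (i, l)

/-- Partial trace over the second (B) factor. -/
noncomputable def ptraceB {r s : ℕ} (ρ : Matrix (Fin r × Fin s) (Fin r × Fin s) ℂ) :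
    Matrix (Fin r) (Fin r) ℂ :=
  fun i j => ∑ k : Fin s, ρ (i, k) (j, k)

noncomputable def vecMat {r s : ℕ} (u : Fin r × Fin s → ℂ) : Matrix (Fin r) (Fin s) ℂ :=
  Matrix.of fun i k => u (i, k)
lemma vecMat_add {r s : ℕ} (u v : Fin r × Fin s → ℂ) : vecMat (u + v) = vecMat u + vecMat v := rfl
lemma vecMat_smul {r s : ℕ} (c : ℂ) (u : Fin r × Fin s → ℂ) : vecMat (c • u) = c • vecMat u := rfl
lemma vecMat_sub {r s : ℕ} (u v : Fin r × Fin s → ℂ) : vecMat (u - v) = vecMat u - vecMat v := rfl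
lemma ptraceB_smul {r s : ℕ} (c : ℂ) (ρ : Matrix (Fin r × Fin s) (Fin r × Fin s) ℂ) :
    ptraceB (c • ρ) = c • ptraceB ρ := by
  funext i j; simp [ptraceB, Finset.mul_sum]
lemma ptraceA_smul {r s : ℕ} (c : ℂ) (ρ : Matrix (Fin r × Fin s) (Fin r × Fin s) ℂ) :
    ptraceA (c • ρ) = c • ptraceA ρ := by
  funext k l; simp [ptraceA, Finset.mul_sum]
lemma ptraceB_outer {r s : ℕ} (u : Fin r × Fin s → ℂ) :
    ptraceB (outerMat u) = vecMat u * (vecMat u)ᴴ := by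
  funext i j
  simp [ptraceB, outerMat, vecMat, Matrix.mul_apply, Matrix.conjTranspose_apply]
lemma ptraceA_outer {r s : ℕ} (u : Fin r × Fin s → ℂ) :
    ptraceA (outerMat u) = ((vecMat u)ᴴ * vecMat u)ᵀ := by
  funext k l
  simp [ptraceA, outerMat, vecMat, Matrix.mul_apply, Matrix.conjTranspose_apply, mul_comm]
lemma outerMat_real_smul {ι : Type*} (t : ℝ) (u : ι → ℂ) :
    outerMat (((t : ℂ)) • u) = ((t^2 : ℝ) : ℂ) • outerMat u := by
  funext p q
  simp [outerMat, Matrix.smul_apply, _root_.map_mul, Complex.conj_ofReal]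
  ring
noncomputable def tensorWith {r s : ℕ} (b : Fin s → ℂ) :
    (Fin r → ℂ) →ₗ[ℂ] (Fin r × Fin s → ℂ) where
  toFun a := fun p => a p.1 * b p.2
  map_add' a a' := by funext p; simp [add_mul]
  map_smul' c a := by funext p; simp [mul_assoc]

lemma mul_conjTranspose_expand {m n : Type*} [Fintype m] [Fintype n]
    (P Q : Matrix m n ℂ) (c : ℂ) :
    (P + c • Q) * (P + c • Q)ᴴ
      = P * Pᴴ + (star c • (P * Qᴴ) + c • (Q * Pᴴ)) + (c * star c) • (Q * Qᴴ) := by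
  rw [Matrix.conjTranspose_add, Matrix.conjTranspose_smul, Matrix.add_mul, Matrix.mul_add,
    Matrix.mul_add, Matrix.smul_mul, Matrix.smul_mul, Matrix.mul_smul, Matrix.mul_smul,
    smul_smul]
  abel

/-- No probabilistic masking: there is no injective linear map `L` on `ℂ^r ⊗ ℂ^s`, fixed
unit state `b` and density matrices `ρA, ρB` such that for every unit `a`, the normalized
image of `a ⊗ b` has marginals `ρA` and `ρB`. -/
theorem stmt17 {r s : ℕ} (hr : 2 ≤ r) (hs : 2 ≤ s) :
    ¬ ∃ (L : (Fin r × Fin s → ℂ) →ₗ[ℂ] (Fin r × Fin s → ℂ))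
        (b : Fin s → ℂ) (ρA : Matrix (Fin r) (Fin r) ℂ) (ρB : Matrix (Fin s) (Fin s) ℂ),
      Function.Injective L ∧
      (∑ k, ‖b k‖ ^ 2 = 1) ∧
      ρA.PosSemidef ∧ ρA.trace = 1 ∧ ρB.PosSemidef ∧ ρB.trace = 1 ∧
      ∀ a : Fin r → ℂ, (∑ j, ‖a j‖ ^ 2 = 1) →
        (let φ := L (fun p => a p.1 * b p.2)
         let c : ℂ := ((∑ p, ‖φ p‖ ^ 2 : ℝ) : ℂ)
         ptraceB (c⁻¹ • outerMat φ) = ρA ∧ ptraceA (c⁻¹ • outerMat φ) = ρB) := by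
  rintro ⟨L, b, ρA, ρB, hLinj, hb, hρA, hρAtr, hρB, hρBtr, hmask⟩
  -- the linear map a ↦ L (a ⊗ b)
  set ψ : (Fin r → ℂ) →ₗ[ℂ] (Fin r × Fin s → ℂ) := L ∘ₗ tensorWith b with hψdef
  set N : (Fin r → ℂ) → ℝ := fun a => ∑ p, ‖ψ a p‖ ^ 2 with hNdef
  -- b is nonzero
  have hb0 : b ≠ 0 := by
    rintro rfl; simp at hb
  -- ψ a ≠ 0 for a ≠ 0
  have hψne : ∀ a : Fin r → ℂ, a ≠ 0 → ψ a ≠ 0 := by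
    intro a ha h0
    obtain ⟨i, hi⟩ := Function.ne_iff.mp ha
    obtain ⟨k, hk⟩ := Function.ne_iff.mp hb0
    have h1 : (fun p : Fin r × Fin s => a p.1 * b p.2) = 0 := by
      apply hLinj
      rw [map_zero]; exact h0
    have := congrFun h1 (i, k)
    simp at this
    tauto
  have hNpos : ∀ a : Fin r → ℂ, a ≠ 0 → 0 < N a := by
    intro a ha
    rcases (Finset.sum_nonneg (fun p _ => sq_nonneg (‖ψ a p‖))).lt_or_eq with h | h
    · exact h
    · exfalso
      apply hψne a ha
      funext p
      have := (Finset.sum_eq_zero_iff_of_nonneg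
        (fun p _ => sq_nonneg (‖ψ a p‖))).mp h.symm p (Finset.mem_univ p)
      simpa [pow_eq_zero_iff] using this
  -- rescaled masking conditions
  have key : ∀ a : Fin r → ℂ, a ≠ 0 →
      vecMat (ψ a) * (vecMat (ψ a))ᴴ = ((N a : ℝ) : ℂ) • ρA ∧
      (vecMat (ψ a))ᴴ * vecMat (ψ a) = ((N a : ℝ) : ℂ) • ρBᵀ := by
    intro a ha
    have hsum : 0 < ∑ j, ‖a j‖ ^ 2 := by
      rcases (Finset.sum_nonneg (fun j _ => sq_nonneg (‖a j‖))).lt_or_eq with h | h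
      · exact h
      · exfalso
        apply ha
        funext j
        have := (Finset.sum_eq_zero_iff_of_nonneg
          (fun j _ => sq_nonneg (‖a j‖))).mp h.symm j (Finset.mem_univ j)
        simpa [pow_eq_zero_iff] using this
    set na : ℝ := Real.sqrt (∑ j, ‖a j‖ ^ 2) with hna
    have hnapos : 0 < na := Real.sqrt_pos.mpr hsum
    have hna2 : na ^ 2 = ∑ j, ‖a j‖ ^ 2 := Real.sq_sqrt hsum.le
    set a' : Fin r → ℂ := ((na⁻¹ : ℝ) : ℂ) • a with ha'
    have hunit : ∑ j, ‖a' j‖ ^ 2 = 1 := by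
      have : ∀ j, ‖a' j‖ ^ 2 = na⁻¹ ^ 2 * ‖a j‖ ^ 2 := by
        intro j
        simp [ha', Pi.smul_apply, _root_.map_mul, Complex.norm_real,
          abs_of_pos (inv_pos.mpr hnapos), mul_pow]
      rw [Finset.sum_congr rfl (fun j _ => this j), ← Finset.mul_sum, ← hna2]
      field_simp
    have hφ : ψ a' = ((na⁻¹ : ℝ) : ℂ) • ψ a := map_smul ψ _ a
    obtain ⟨h1, h2⟩ := hmask a' hunit
    have hNa' : (∑ p, ‖ψ a' p‖ ^ 2) = na⁻¹ ^ 2 * N a := by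
      have : ∀ p, ‖ψ a' p‖ ^ 2 = na⁻¹ ^ 2 * ‖ψ a p‖ ^ 2 := by
        intro p
        rw [hφ]
        simp [Pi.smul_apply, _root_.map_mul, Complex.norm_real,
          abs_of_pos (inv_pos.mpr hnapos), mul_pow]
      rw [Finset.sum_congr rfl (fun p _ => this p), ← Finset.mul_sum]
    have houter : outerMat (ψ a') = ((na⁻¹ ^ 2 : ℝ) : ℂ) • outerMat (ψ a) := by
      rw [hφ, outerMat_real_smul]
    have hNane : (N a : ℂ) ≠ 0 := by
      exact_mod_cast ne_of_gt (hNpos a ha)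
    have hnane : ((na : ℂ)) ≠ 0 := by exact_mod_cast ne_of_gt hnapos
    have hscal : ((↑(∑ p, ‖ψ a' p‖ ^ 2) : ℂ))⁻¹ • outerMat (ψ a')
        = ((N a : ℝ) : ℂ)⁻¹ • outerMat (ψ a) := by
      rw [houter, hNa', smul_smul]
      congr 1
      push_cast
      field_simp
    -- h1, h2 in terms of ψ a
    have h1' : ptraceB (((N a : ℝ) : ℂ)⁻¹ • outerMat (ψ a)) = ρA := by
      rw [← hscal]; exact h1
    have h2' : ptraceA (((N a : ℝ) : ℂ)⁻¹ • outerMat (ψ a)) = ρB := by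
      rw [← hscal]; exact h2
    constructor
    · have := h1'
      rw [ptraceB_smul, ptraceB_outer] at this
      have h3 := congrArg (fun M => ((N a : ℝ) : ℂ) • M) this
      simpa [smul_smul, mul_inv_cancel₀ hNane] using h3
    · have := h2'
      rw [ptraceA_smul, ptraceA_outer] at this
      have h3 := congrArg (fun M => (((N a : ℝ) : ℂ) • M)ᵀ) this
      simp only [Matrix.transpose_smul, Matrix.transpose_transpose] at h3
      rw [smul_smul, mul_inv_cancel₀ hNane, one_smul] at h3
      exact h3
  -- basis vectors
  have h0r : 0 < r := by omega
  have h1r : 1 < r := by omega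
  set i0 : Fin r := ⟨0, h0r⟩ with hi0
  set i1 : Fin r := ⟨1, h1r⟩ with hi1
  have hi01 : i0 ≠ i1 := by simp [hi0, hi1, Fin.ext_iff]
  set e0 : Fin r → ℂ := Pi.single i0 1 with he0d
  set e1 : Fin r → ℂ := Pi.single i1 1 with he1d
  have he0 : e0 ≠ 0 := fun h => by simpa [he0d] using congrFun h i0
  have he1 : e1 ≠ 0 := fun h => by simpa [he1d] using congrFun h i1
  have he1at0 : e1 i0 = 0 := Pi.single_eq_of_ne hi01 1
  have he0at1 : e0 i1 = 0 := Pi.single_eq_of_ne hi01.symm 1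
  have hep : e0 + e1 ≠ 0 := by
    intro h
    have := congrFun h i0
    simp [he0d, he1at0] at this
  have heq : e0 + Complex.I • e1 ≠ 0 := by
    intro h
    have := congrFun h i0
    simp [he0d, he1at0] at this
  set A0 : Matrix (Fin r) (Fin s) ℂ := vecMat (ψ e0) with hA0
  set A1 : Matrix (Fin r) (Fin s) ℂ := vecMat (ψ e1) with hA1
  set N0 : ℝ := N e0 with hN0
  set N1 : ℝ := N e1 with hN1
  set Np : ℝ := N (e0 + e1) with hNp
  set Nq : ℝ := N (e0 + Complex.I • e1) with hNq
  obtain ⟨h00, h00'⟩ := key e0 he0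
  obtain ⟨h11, _⟩ := key e1 he1
  have hpkey := (key (e0 + e1) hep).1
  have hqkey := (key (e0 + Complex.I • e1) heq).1
  rw [_root_.map_add, vecMat_add] at hpkey
  rw [_root_.map_add, _root_.map_smul, vecMat_add, vecMat_smul] at hqkey
  simp only [← hA0, ← hA1, ← hN0, ← hN1, ← hNp, ← hNq] at h00 h00' h11 hpkey hqkey
  -- expansions
  have hpexp : A0*A0ᴴ + (A0*A1ᴴ + A1*A0ᴴ) + A1*A1ᴴ = ((Np : ℝ) : ℂ) • ρA := by
    rw [← hpkey, Matrix.conjTranspose_add, Matrix.add_mul, Matrix.mul_add, Matrix.mul_add]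
    abel
  have hqexp : A0*A0ᴴ + ((-Complex.I)•(A0*A1ᴴ) + Complex.I•(A1*A0ᴴ)) + A1*A1ᴴ
      = ((Nq : ℝ) : ℂ) • ρA := by
    have hq2 := mul_conjTranspose_expand A0 A1 Complex.I
    rw [hqkey, show star Complex.I = -Complex.I by simp [Complex.star_def],
      show Complex.I * -Complex.I = 1 by simp, one_smul] at hq2
    exact hq2.symm
  have hc1 : A0*A1ᴴ + A1*A0ᴴ = ((Np - N0 - N1 : ℝ) : ℂ) • ρA := by
    have h : A0*A1ᴴ + A1*A0ᴴ
        = ((Np : ℝ):ℂ)•ρA - ((N0 : ℝ):ℂ)•ρA - ((N1 : ℝ):ℂ)•ρA := by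
      rw [← hpexp, h00, h11]; abel
    rw [h]; push_cast; module
  have hc2 : (-Complex.I)•(A0*A1ᴴ) + Complex.I•(A1*A0ᴴ) = ((Nq - N0 - N1 : ℝ) : ℂ) • ρA := by
    have h : (-Complex.I)•(A0*A1ᴴ) + Complex.I•(A1*A0ᴴ)
        = ((Nq : ℝ):ℂ)•ρA - ((N0 : ℝ):ℂ)•ρA - ((N1 : ℝ):ℂ)•ρA := by
      rw [← hqexp, h00, h11]; abel
    rw [h]; push_cast; module
  set τ2 : ℂ := ((Np - N0 - N1 : ℝ) : ℂ) + Complex.I * ((Nq - N0 - N1 : ℝ) : ℂ) with hτ2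
  have htau : (2:ℂ) • (A0*A1ᴴ) = τ2 • ρA := by
    calc (2:ℂ)•(A0*A1ᴴ)
        = (A0*A1ᴴ + A1*A0ᴴ)
          + Complex.I • ((-Complex.I)•(A0*A1ᴴ) + Complex.I•(A1*A0ᴴ)) := by
          rw [smul_add, smul_smul, smul_smul,
            show Complex.I * -Complex.I = 1 by simp,
            show Complex.I * Complex.I = -1 from Complex.I_mul_I, one_smul]
          module
      _ = ((Np - N0 - N1 : ℝ):ℂ)•ρA + Complex.I • (((Nq - N0 - N1 : ℝ):ℂ)•ρA) := by
          rw [hc1, hc2]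
      _ = τ2 • ρA := by rw [smul_smul, ← add_smul, hτ2]
  -- the orthogonal direction
  set a2 : Fin r → ℂ := ((2*N0 : ℝ) : ℂ) • e1 - (starRingEnd ℂ) τ2 • e0 with ha2d
  have hN0pos : 0 < N0 := hNpos e0 he0
  have ha2 : a2 ≠ 0 := by
    intro h
    have := congrFun h i1
    simp [ha2d, he0at1, he1d] at this
    have h2 : N0 = 0 := by exact_mod_cast this
    linarith
  have hAΨ : vecMat (ψ a2) = ((2*N0 : ℝ) : ℂ) • A1 - (starRingEnd ℂ) τ2 • A0 := by
    rw [ha2d, _root_.map_sub, _root_.map_smul, _root_.map_smul, vecMat_sub, vecMat_smul, vecMat_smul]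
  have hΨA : A0 * (vecMat (ψ a2))ᴴ = 0 := by
    rw [hAΨ, Matrix.conjTranspose_sub, Matrix.conjTranspose_smul, Matrix.conjTranspose_smul,
      Matrix.mul_sub, Matrix.mul_smul, Matrix.mul_smul, h00]
    simp only [Complex.star_def, Complex.conj_conj, Complex.conj_ofReal]
    have h : ((2*N0 : ℝ):ℂ) • (A0*A1ᴴ) = ((N0 : ℝ):ℂ) • ((2:ℂ)•(A0*A1ᴴ)) := by
      push_cast; module
    rw [h, htau]
    module
  obtain ⟨_, hσΨ⟩ := key a2 ha2
  have hNa2 : (0:ℝ) < N a2 := hNpos a2 ha2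
  have hA0σ : A0 * ρBᵀ = 0 := by
    have h0 : A0 * ((vecMat (ψ a2))ᴴ * vecMat (ψ a2)) = 0 := by
      rw [← Matrix.mul_assoc, hΨA, Matrix.zero_mul]
    rw [hσΨ, Matrix.mul_smul] at h0
    rcases smul_eq_zero.mp h0 with h | h
    · exact absurd h (by exact_mod_cast ne_of_gt hNa2)
    · exact h
  have hmid : A0 * (A0ᴴ * A0) = 0 := by
    rw [h00', Matrix.mul_smul, hA0σ, smul_zero]
  have hz2 : (((N0 : ℝ):ℂ) • ρBᵀ) * (((N0 : ℝ):ℂ) • ρBᵀ) = 0 := by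
    calc (((N0 : ℝ):ℂ) • ρBᵀ) * (((N0 : ℝ):ℂ) • ρBᵀ) = (A0ᴴ*A0) * (A0ᴴ*A0) := by rw [h00']
      _ = A0ᴴ * (A0 * (A0ᴴ * A0)) := by simp only [Matrix.mul_assoc]
      _ = 0 := by rw [hmid, Matrix.mul_zero]
  have hσσ : ρBᵀ * ρBᵀ = 0 := by
    rw [Matrix.smul_mul, Matrix.mul_smul, smul_smul] at hz2
    rcases smul_eq_zero.mp hz2 with h | h
    · exact absurd h (mul_ne_zero (by exact_mod_cast ne_of_gt hN0pos)
        (by exact_mod_cast ne_of_gt hN0pos))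
    · exact h
  have hherm : (ρBᵀ)ᴴ = ρBᵀ := by
    calc (ρBᵀ)ᴴ = (ρBᴴ)ᵀ := rfl
      _ = ρBᵀ := by rw [hρB.1]
  have hσ0 : ρBᵀ = 0 := by
    apply Matrix.conjTranspose_mul_self_eq_zero.mp
    rw [hherm]; exact hσσ
  have hρB0 : ρB = 0 := by
    have h := congrArg Matrix.transpose hσ0
    simpa using h
  rw [hρB0] at hρBtr
  simp at hρBtr
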